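/- arXiv:1407.6329 — 3 statements merged into one kernel-verified Lean document; each statement's English description precedes it below -/
import Mathlib

section
/- Let m ≥ 1 and n', n'' ≥ 0 be integers, and suppose C ⊆ ℤ4^{2m} × ℤ2^{2n'} × ℤ4^{n''} is an additive 1-perfect code with respect to the Doob D(m, n'+n'')-metric. Then n'' ≠ 1, and there exist an even integer Γ ≥ 0 and an integer Δ ≥ 2 such that 2m + n' + n'' = (2^{Γ+2Δ} − 1)/3, 3n' + n'' = 2^{Γ+Δ} − 1, and n'' ≤ 2^Δ − 1. -/
open SimpleGraph

/-- The box (Cartesian) product of an indexed family of simple graphs. -/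
def boxPi {ι : Type*} {V : ι → Type*} (G : ∀ i, SimpleGraph (V i)) :
    SimpleGraph (∀ i, V i) where
  Adj x y := ∃ i, (G i).Adj (x i) (y i) ∧ ∀ j, j ≠ i → x j = y j
  symm := by
    constructor
    rintro x y ⟨i, h, he⟩
    exact ⟨i, (G i).adj_symm h, fun j hj => (he j hj).symm⟩
  loopless := by
    constructor
    rintro x ⟨i, h, -⟩
    exact (G i).loopless.irrefl _ h

/-- The Shrikhande graph on `(ZMod 4) × (ZMod 4)`. -/
def Shri : SimpleGraph (ZMod 4 × ZMod 4) where
  Adj a b := a - b ∈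
    ({(0, 1), (1, 0), (1, 1), (0, 3), (3, 0), (3, 3)} : Finset (ZMod 4 × ZMod 4))
  symm := by
    have h : ∀ a b : ZMod 4 × ZMod 4,
        a - b ∈ ({(0, 1), (1, 0), (1, 1), (0, 3), (3, 0), (3, 3)} :
          Finset (ZMod 4 × ZMod 4)) →
        b - a ∈ ({(0, 1), (1, 0), (1, 1), (0, 3), (3, 0), (3, 3)} :
          Finset (ZMod 4 × ZMod 4)) := by decide
    exact ⟨fun a b hab => h a b hab⟩
  loopless := by
    constructor
    intro a h
    rw [sub_self] at h
    revert h
    decide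

/-- The vertex set `ℤ₄^{2m} × ℤ₂^{2n'} × ℤ₄^{n''}`, the consecutive pairs of
`ZMod 4`- (resp. `ZMod 2`-) coordinates being grouped together. -/
abbrev DoobVtx (m n' n'' : ℕ) : Type :=
  (Fin m → ZMod 4 × ZMod 4) × (Fin n' → ZMod 2 × ZMod 2) × (Fin n'' → ZMod 4)

/-- The Doob graph `D(m, n' + n'')` on `ℤ₄^{2m} × ℤ₂^{2n'} × ℤ₄^{n''}`:
a Shrikhande graph on each pair of the first `2m` `ZMod 4`-coordinates, a `K₄` on
each pair of `ZMod 2`-coordinates, and a `K₄` on each of the last `n''`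
`ZMod 4`-coordinates; the whole graph is the box product of the factors. -/
def DoobGraphZ (m n' n'' : ℕ) : SimpleGraph (DoobVtx m n' n'') :=
  (boxPi fun _ : Fin m => Shri) □
    ((boxPi fun _ : Fin n' => (⊤ : SimpleGraph (ZMod 2 × ZMod 2))) □
      (boxPi fun _ : Fin n'' => (⊤ : SimpleGraph (ZMod 4))))

/-- `C` is a 1-perfect code in `G`: every vertex is at graph distance at most 1
(i.e., equal or adjacent) from exactly one element of `C`. -/
def IsPerfectCode {V : Type*} (G : SimpleGraph V) (C : Set V) : Prop :=
  ∀ v : V, ∃! c : V, c ∈ C ∧ (v = c ∨ G.Adj v c)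
namespace DoobAux

def shFin : Fin 6 → ZMod 4 × ZMod 4 := ![(0,1),(1,0),(1,1),(0,3),(3,0),(3,3)]
def k4Fin : Fin 3 → ZMod 2 × ZMod 2 := ![(0,1),(1,0),(1,1)]
def z4Fin : Fin 3 → ZMod 4 := ![1,2,3]

abbrev BIdx (m n' n'' : ℕ) : Type :=
  (Fin m × Fin 6) ⊕ (Fin n' × Fin 3) ⊕ (Fin n'' × Fin 3)

variable {m n' n'' : ℕ}

def embS : BIdx m n' n'' → DoobVtx m n' n''
  | .inl (i, a) => (Pi.single i (shFin a), 0, 0)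
  | .inr (.inl (i, a)) => (0, Pi.single i (k4Fin a), 0)
  | .inr (.inr (j, a)) => (0, 0, Pi.single j (z4Fin a))

lemma shFin_ne_zero (a : Fin 6) : shFin a ≠ 0 := by fin_cases a <;> decide
lemma k4Fin_ne_zero (a : Fin 3) : k4Fin a ≠ 0 := by fin_cases a <;> decide
lemma z4Fin_ne_zero (a : Fin 3) : z4Fin a ≠ 0 := by fin_cases a <;> decide
lemma shFin_inj : Function.Injective shFin := by decide
lemma k4Fin_inj : Function.Injective k4Fin := by decide
lemma z4Fin_inj : Function.Injective z4Fin := by decide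

lemma single_eq_single {n : ℕ} {α : Type*} [AddCommGroup α] {i i' : Fin n} {v v' : α}
    (hv : v ≠ 0) (h : (Pi.single i v : Fin n → α) = Pi.single i' v') : i = i' ∧ v = v' := by
  by_cases hii : i = i'
  · subst hii
    refine ⟨rfl, ?_⟩
    have := congrFun h i
    simpa using this
  · have h1 := congrFun h i
    rw [Pi.single_eq_same, Pi.single_eq_of_ne hii] at h1
    exact absurd h1 hv

lemma embS_ne_zero (k : BIdx m n' n'') : embS k ≠ 0 := by
  rcases k with ⟨i, a⟩ | ⟨i, a⟩ | ⟨j, a⟩ <;> intro h <;>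
      simp only [embS, Prod.ext_iff] at h
  · exact (shFin_ne_zero a) (by simpa using congrFun h.1 i)
  · exact (k4Fin_ne_zero a) (by simpa using congrFun h.2.1 i)
  · exact (z4Fin_ne_zero a) (by simpa using congrFun h.2.2 j)

lemma embS_inj : Function.Injective (embS (m := m) (n' := n') (n'' := n'')) := by
  rintro (⟨i, a⟩ | ⟨i, a⟩ | ⟨i, a⟩) (⟨i', a'⟩ | ⟨i', a'⟩ | ⟨i', a'⟩) h <;>
      simp only [embS, Prod.mk.injEq] at h
  · obtain ⟨h1, h2⟩ := single_eq_single (shFin_ne_zero a) h.1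
    rw [h1, shFin_inj h2]
  · exact absurd (by simpa using congrFun h.1 i) (shFin_ne_zero a)
  · exact absurd (by simpa using congrFun h.1 i) (shFin_ne_zero a)
  · exact absurd (by simpa using congrFun h.2.1 i) (k4Fin_ne_zero a)
  · obtain ⟨h1, h2⟩ := single_eq_single (k4Fin_ne_zero a) h.2.1
    rw [h1, k4Fin_inj h2]
  · exact absurd (by simpa using congrFun h.2.1 i) (k4Fin_ne_zero a)
  · exact absurd (by simpa using congrFun h.2.2 i) (z4Fin_ne_zero a)
  · exact absurd (by simpa using congrFun h.2.2 i) (z4Fin_ne_zero a)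
  · obtain ⟨h1, h2⟩ := single_eq_single (z4Fin_ne_zero a) h.2.2
    rw [h1, z4Fin_inj h2]

def negIdx : BIdx m n' n'' → BIdx m n' n''
  | .inl (i, a) => .inl (i, ![3, 4, 5, 0, 1, 2] a)
  | .inr (.inl (i, a)) => .inr (.inl (i, a))
  | .inr (.inr (j, a)) => .inr (.inr (j, ![2, 1, 0] a))

lemma neg_single {n : ℕ} {α : Type*} [AddCommGroup α] (i : Fin n) (v : α) :
    -(Pi.single i v : Fin n → α) = Pi.single i (-v) := by
  ext j
  by_cases h : j = i
  · subst h; simp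
  · simp [Pi.single_eq_of_ne h]

lemma embS_neg (k : BIdx m n' n'') : -embS k = embS (negIdx k) := by
  rcases k with ⟨i, a⟩ | ⟨i, a⟩ | ⟨j, a⟩
  · show (-(Pi.single i (shFin a) : Fin m → ZMod 4 × ZMod 4), -(0 : Fin n' → ZMod 2 × ZMod 2),
      -(0 : Fin n'' → ZMod 4)) = _
    rw [neg_single, neg_zero, neg_zero]
    have : -shFin a = shFin (![3,4,5,0,1,2] a) := by fin_cases a <;> decide
    rw [this]; rfl
  · show (-(0 : Fin m → ZMod 4 × ZMod 4), -(Pi.single i (k4Fin a) : Fin n' → ZMod 2 × ZMod 2),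
      -(0 : Fin n'' → ZMod 4)) = _
    rw [neg_single, neg_zero, neg_zero]
    have : -k4Fin a = k4Fin a := by fin_cases a <;> decide
    rw [this]; rfl
  · show (-(0 : Fin m → ZMod 4 × ZMod 4), -(0 : Fin n' → ZMod 2 × ZMod 2),
      -(Pi.single j (z4Fin a) : Fin n'' → ZMod 4)) = _
    rw [neg_single, neg_zero, neg_zero]
    have : -z4Fin a = z4Fin (![2,1,0] a) := by fin_cases a <;> decide
    rw [this]; rfl

end DoobAux
namespace DoobAux
variable {m n' n'' : ℕ}

lemma boxPi_adj_iff {k : ℕ} {α T : Type*} [AddCommGroup α] (G : SimpleGraph α)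
    (ff : T → α) (hf : ∀ a b : α, G.Adj a b ↔ ∃ t, a - b = ff t) (x y : Fin k → α) :
    (boxPi fun _ : Fin k => G).Adj x y ↔
      ∃ i t, x - y = Pi.single i (ff t) := by
  constructor
  · rintro ⟨i, hadj, hother⟩
    obtain ⟨t, ht⟩ := (hf _ _).mp hadj
    refine ⟨i, t, funext fun j => ?_⟩
    by_cases hj : j = i
    · subst hj; simpa using ht
    · have := hother j hj
      simp [Pi.single_eq_of_ne hj, this]
  · rintro ⟨i, t, h⟩
    refine ⟨i, (hf _ _).mpr ⟨t, by simpa using congrFun h i⟩, fun j hj => ?_⟩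
    have := congrFun h j
    rw [Pi.sub_apply, Pi.single_eq_of_ne hj] at this
    exact sub_eq_zero.mp this

lemma shri_adj_iff : ∀ a b : ZMod 4 × ZMod 4,
    Shri.Adj a b ↔ ∃ t : Fin 6, a - b = shFin t := by
  have key : ∀ c : ZMod 4 × ZMod 4,
      (c ∈ ({(0, 1), (1, 0), (1, 1), (0, 3), (3, 0), (3, 3)} :
        Finset (ZMod 4 × ZMod 4))) ↔ ∃ t : Fin 6, c = shFin t := by decide
  intro a b
  exact key (a - b)

lemma k4_adj_iff : ∀ a b : ZMod 2 × ZMod 2,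
    (⊤ : SimpleGraph (ZMod 2 × ZMod 2)).Adj a b ↔ ∃ t : Fin 3, a - b = k4Fin t := by
  have key : ∀ a b : ZMod 2 × ZMod 2, a ≠ b ↔ ∃ t : Fin 3, a - b = k4Fin t := by decide
  intro a b
  rw [SimpleGraph.top_adj]
  exact key a b

lemma z4_adj_iff : ∀ a b : ZMod 4,
    (⊤ : SimpleGraph (ZMod 4)).Adj a b ↔ ∃ t : Fin 3, a - b = z4Fin t := by
  have key : ∀ a b : ZMod 4, a ≠ b ↔ ∃ t : Fin 3, a - b = z4Fin t := by decide
  intro a b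
  rw [SimpleGraph.top_adj]
  exact key a b

lemma doob_adj (x y : DoobVtx m n' n'') :
    (DoobGraphZ m n' n'').Adj x y ↔ ∃ k : BIdx m n' n'', x - y = embS k := by
  obtain ⟨x1, x2, x3⟩ := x
  obtain ⟨y1, y2, y3⟩ := y
  rw [DoobGraphZ, SimpleGraph.boxProd_adj, SimpleGraph.boxProd_adj,
    boxPi_adj_iff _ _ shri_adj_iff, boxPi_adj_iff _ _ k4_adj_iff,
    boxPi_adj_iff _ _ z4_adj_iff]
  constructor
  · rintro (⟨⟨i, t, h⟩, h23⟩ | ⟨⟨⟨i, t, h⟩, h3⟩ | ⟨⟨i, t, h⟩, h2⟩, h1⟩)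
    · obtain ⟨h2, h3⟩ := Prod.mk.injEq .. ▸ h23
      exact ⟨.inl (i, t), by
        simp only [embS, Prod.mk_sub_mk, Prod.mk.injEq]
        exact ⟨h, sub_eq_zero.mpr h2, sub_eq_zero.mpr h3⟩⟩
    · exact ⟨.inr (.inl (i, t)), by
        simp only [embS, Prod.mk_sub_mk, Prod.mk.injEq]
        exact ⟨sub_eq_zero.mpr h1, h, sub_eq_zero.mpr h3⟩⟩
    · exact ⟨.inr (.inr (i, t)), by
        simp only [embS, Prod.mk_sub_mk, Prod.mk.injEq]
        exact ⟨sub_eq_zero.mpr h1, sub_eq_zero.mpr h2, h⟩⟩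
  · rintro ⟨(⟨i, t⟩ | ⟨i, t⟩ | ⟨i, t⟩), h⟩ <;>
        simp only [embS, Prod.mk.injEq, Prod.mk_sub_mk] at h <;>
        obtain ⟨h1, h2, h3⟩ := h
    · exact .inl ⟨⟨i, t, h1⟩, by
        rw [Prod.mk.injEq]
        exact ⟨sub_eq_zero.mp h2, sub_eq_zero.mp h3⟩⟩
    · exact .inr ⟨.inl ⟨⟨i, t, h2⟩, sub_eq_zero.mp h3⟩, sub_eq_zero.mp h1⟩
    · exact .inr ⟨.inr ⟨⟨i, t, h3⟩, sub_eq_zero.mp h2⟩, sub_eq_zero.mp h1⟩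

end DoobAux
namespace DoobAux
variable {m n' n'' : ℕ}

def embO : Option (BIdx m n' n'') → DoobVtx m n' n''
  | none => 0
  | some k => embS k

lemma embO_inj : Function.Injective (embO (m := m) (n' := n') (n'' := n'')) := by
  rintro (_ | k) (_ | k') h
  · rfl
  · exact absurd h.symm (embS_ne_zero k')
  · exact absurd h (embS_ne_zero k)
  · rw [embS_inj h]

variable (C : AddSubgroup (DoobVtx m n' n''))

def qmap : DoobVtx m n' n'' →+ (DoobVtx m n' n'') ⧸ C := QuotientAddGroup.mk' C

variable {C}

lemma ball_mem (v : DoobVtx m n' n'') (o : Option (BIdx m n' n'')) (c : DoobVtx m n' n'')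
    (hc : c ∈ C) (hvc : v - c = embO o) :
    c ∈ (C : Set (DoobVtx m n' n'')) ∧ (v = c ∨ (DoobGraphZ m n' n'').Adj v c) := by
  refine ⟨hc, ?_⟩
  cases o with
  | none => exact Or.inl (sub_eq_zero.mp hvc)
  | some k => exact Or.inr ((doob_adj v c).mpr ⟨k, hvc⟩)

lemma g_bijective (hC : IsPerfectCode (DoobGraphZ m n' n'') (C : Set (DoobVtx m n' n''))) :
    Function.Bijective (fun o => qmap C (embO o)) := by
  constructor
  · intro o₁ o₂ h
    have hd : embO o₁ - embO o₂ ∈ C := by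
      rw [← QuotientAddGroup.eq_zero_iff (N := C)]
      simp only [qmap, QuotientAddGroup.mk'_apply] at h ⊢
      rw [QuotientAddGroup.mk_sub]
      rw [show ((embO o₁ : DoobVtx m n' n'') : (DoobVtx m n' n'') ⧸ C) = embO o₂ from h]
      exact sub_self _
    obtain ⟨c, -, hu⟩ := hC (embO o₁)
    have h1 := hu 0 (ball_mem (embO o₁) o₁ 0 C.zero_mem (by rw [sub_zero]))
    have h2 := hu (embO o₁ - embO o₂) (ball_mem (embO o₁) o₂ _ hd (by abel))
    apply embO_inj
    have : embO o₁ - embO o₂ = 0 := h2.trans h1.symm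
    rw [← sub_eq_zero]
    exact this
  · intro q
    obtain ⟨v, rfl⟩ := QuotientAddGroup.mk'_surjective C q
    obtain ⟨c, ⟨hcC, hor⟩, -⟩ := hC v
    have : ∃ o, embO o = v - c := by
      rcases hor with h | h
      · exact ⟨none, by rw [h, sub_self]; rfl⟩
      · obtain ⟨k, hk⟩ := (doob_adj v c).mp h
        exact ⟨some k, hk.symm⟩
    obtain ⟨o, ho⟩ := this
    refine ⟨o, ?_⟩
    show qmap C (embO o) = qmap C v
    rw [ho, map_sub]
    rw [show qmap C c = 0 from (QuotientAddGroup.eq_zero_iff c).mpr hcC, sub_zero]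

lemma double_ne_zero (hC : IsPerfectCode (DoobGraphZ m n' n'') (C : Set (DoobVtx m n' n'')))
    (k : BIdx m n' n'') (h2 : embS k + embS k ≠ 0) :
    qmap C (embS k + embS k) ≠ 0 := by
  intro h0
  have hc : embS k + embS k ∈ C := (QuotientAddGroup.eq_zero_iff _).mp h0
  obtain ⟨c, -, hu⟩ := hC (embS k)
  have h1 := hu 0 (ball_mem (embS k) (some k) 0 C.zero_mem (by rw [sub_zero]; rfl))
  have hsub : embS k - (embS k + embS k) = embO (some (negIdx k)) := by
    show _ = embS (negIdx k)
    rw [← embS_neg]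
    abel
  have h2' := hu (embS k + embS k) (ball_mem (embS k) (some (negIdx k)) _ hc hsub)
  exact h2 (h2'.trans h1.symm)

end DoobAux
namespace DoobAux

def dbl (G : Type*) [AddCommGroup G] : G →+ G :=
  AddMonoidHom.mk' (fun x => x + x) (fun a b => by abel_nf)

lemma dbl_apply {G : Type*} [AddCommGroup G] (x : G) : dbl G x = x + x := rfl

section Main
variable {m n' n'' : ℕ} {C : AddSubgroup (DoobVtx m n' n'')}

lemma vtx_four_torsion (v : DoobVtx m n' n'') : v + v + (v + v) = 0 := by
  obtain ⟨a, b, c⟩ := v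
  have h1 : ∀ z : ZMod 4 × ZMod 4, z + z + (z + z) = 0 := by decide
  have h2 : ∀ z : ZMod 2 × ZMod 2, z + z + (z + z) = 0 := by decide
  have h3 : ∀ z : ZMod 4, z + z + (z + z) = 0 := by decide
  refine Prod.ext (funext fun i => h1 _) (Prod.ext (funext fun i => h2 _) (funext fun i => h3 _))

lemma q_four_torsion (x : (DoobVtx m n' n'') ⧸ C) : x + x + (x + x) = 0 := by
  obtain ⟨v, rfl⟩ := QuotientAddGroup.mk'_surjective C x
  rw [show ((QuotientAddGroup.mk' C) v) = qmap C v from rfl, ← map_add, ← map_add,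
    vtx_four_torsion, map_zero]

lemma q_tors_neg {x : (DoobVtx m n' n'') ⧸ C} (h : x + x = 0) : -x = x :=
  neg_eq_of_add_eq_zero_left h

/-- images in the quotient of the doubles of Shrikhande-type ball elements -/
def ψ (C : AddSubgroup (DoobVtx m n' n'')) (i : Fin m) (a : Fin 6) :
    (DoobVtx m n' n'') ⧸ C :=
  qmap C (embS (m := m) (n' := n') (n'' := n'') (.inl (i, a)) + embS (.inl (i, a)))

/-- images in the quotient of the doubles of `ZMod 4`-type ball elements -/
def τ (C : AddSubgroup (DoobVtx m n' n'')) (j : Fin n'') (a : Fin 3) :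
    (DoobVtx m n' n'') ⧸ C :=
  qmap C (embS (m := m) (n' := n') (n'' := n'') (.inr (.inr (j, a)))
    + embS (.inr (.inr (j, a))))

lemma ψ_def (i : Fin m) (a : Fin 6) :
    ψ C i a = qmap C (embS (.inl (i, a)) + embS (.inl (i, a))) := rfl

lemma τ_def (j : Fin n'') (a : Fin 3) :
    τ C j a = qmap C (embS (.inr (.inr (j, a))) + embS (.inr (.inr (j, a)))) := rfl

lemma ψ_ne_zero (hC : IsPerfectCode (DoobGraphZ m n' n'') (C : Set (DoobVtx m n' n'')))
    (i : Fin m) (a : Fin 6) : ψ C i a ≠ 0 := by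
  apply double_ne_zero hC
  intro h
  have key : ∀ b : Fin 6, shFin b + shFin b ≠ 0 := by decide
  apply key a
  have := congrFun (congrArg Prod.fst h) i
  simpa [embS] using this

lemma τ_ne_zero (hC : IsPerfectCode (DoobGraphZ m n' n'') (C : Set (DoobVtx m n' n'')))
    (j : Fin n'') (a : Fin 3) (ha : a ≠ 1) : τ C j a ≠ 0 := by
  apply double_ne_zero hC
  intro h
  have key : ∀ b : Fin 3, b ≠ 1 → z4Fin b + z4Fin b ≠ 0 := by decide
  apply key a ha
  have := congrFun (congrArg (fun v : DoobVtx m n' n'' => v.2.2) h) j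
  simpa [embS] using this

lemma τ_one_eq_zero (j : Fin n'') : τ C j 1 = (0 : (DoobVtx m n' n'') ⧸ C) := by
  have hs : (Pi.single j (z4Fin 1) : Fin n'' → ZMod 4) + Pi.single j (z4Fin 1) = 0 := by
    rw [← Pi.single_add, show z4Fin 1 + z4Fin 1 = 0 by decide, Pi.single_zero]
  have h : embS (m := m) (n' := n') (n'' := n'') (.inr (.inr (j, 1)))
      + embS (.inr (.inr (j, 1))) = 0 := by
    show ((0, 0, Pi.single j (z4Fin 1)) : DoobVtx m n' n'')
      + (0, 0, Pi.single j (z4Fin 1)) = 0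
    simp [hs, Prod.mk_add_mk]
  rw [τ_def, h, map_zero]

lemma ψ_tors (i : Fin m) (a : Fin 6) : ψ C i a + ψ C i a = 0 := by
  rw [ψ_def, ← map_add, vtx_four_torsion, map_zero]

lemma τ_tors (j : Fin n'') (a : Fin 3) : τ C j a + τ C j a = 0 := by
  rw [τ_def, ← map_add, vtx_four_torsion, map_zero]

lemma ψ_neg_eq (i : Fin m) (a : Fin 6) : ψ C i (![3,4,5,0,1,2] a) = ψ C i a := by
  have hneg : embS (m := m) (n' := n') (n'' := n'') (.inl (i, ![3,4,5,0,1,2] a))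
      = -embS (.inl (i, a)) := (embS_neg (.inl (i, a))).symm
  rw [ψ_def, hneg, ← neg_add, map_neg, ← ψ_def]
  exact q_tors_neg (ψ_tors i a)

lemma τ_neg_eq (j : Fin n'') : τ C j 2 = τ C j 0 := by
  have hneg : embS (m := m) (n' := n') (n'' := n'') (.inr (.inr (j, 2)))
      = -embS (.inr (.inr (j, 0))) := (embS_neg (.inr (.inr (j, 0)))).symm
  rw [τ_def, hneg, ← neg_add, map_neg, ← τ_def]
  exact q_tors_neg (τ_tors j 0)

lemma ψ_add (i : Fin m) : ψ C i 0 + ψ C i 1 = ψ C i 2 := by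
  rw [ψ_def, ψ_def, ψ_def, ← map_add]
  congr 1
  simp only [embS, Prod.mk_add_mk, add_zero, Prod.mk.injEq]
  rw [← Pi.single_add, ← Pi.single_add, ← Pi.single_add, ← Pi.single_add]
  exact ⟨congrArg (Pi.single i) (by decide), trivial⟩

lemma ψ_mem_range (i : Fin m) (a : Fin 6) :
    ψ C i a ∈ (dbl ((DoobVtx m n' n'') ⧸ C)).range :=
  ⟨qmap C (embS (.inl (i, a))), by rw [dbl_apply, ← map_add, ψ_def]⟩

lemma τ_mem_range (j : Fin n'') (a : Fin 3) :
    τ C j a ∈ (dbl ((DoobVtx m n' n'') ⧸ C)).range :=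
  ⟨qmap C (embS (.inr (.inr (j, a)))), by rw [dbl_apply, ← map_add, τ_def]⟩

end Main
end DoobAux
namespace DoobAux

lemma card_fiber_eq_card_ker {G : Type*} [AddCommGroup G] (t : G) (ht : t ∈ (dbl G).range) :
    Nat.card {x : G // x + x = t} = Nat.card (dbl G).ker := by
  obtain ⟨x₀, hx₀⟩ := ht
  rw [dbl_apply] at hx₀
  refine Nat.card_congr ⟨fun x => ⟨x.1 - x₀, ?_⟩, fun k => ⟨x₀ + k.1, ?_⟩, ?_, ?_⟩
  · rw [AddMonoidHom.mem_ker, map_sub, dbl_apply, dbl_apply, x.2, hx₀, sub_self]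
  · have hk : (k : G) + (k : G) = 0 := by
      have hk2 := k.2
      rw [AddMonoidHom.mem_ker, dbl_apply] at hk2
      exact hk2
    show x₀ + k.1 + (x₀ + k.1) = t
    rw [show x₀ + k.1 + (x₀ + k.1) = x₀ + x₀ + (k.1 + k.1) by abel, hx₀, hk, add_zero]
  · intro x
    ext
    show x₀ + (x.1 - x₀) = x.1
    abel
  · intro k
    ext
    show x₀ + k.1 - x₀ = k.1
    abel

section Main
variable {m n' n'' : ℕ} {C : AddSubgroup (DoobVtx m n' n'')}

lemma k4_double_zero (i : Fin n') (a : Fin 3) :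
    qmap C (embS (m := m) (n' := n') (n'' := n'') (.inr (.inl (i, a)))
      + embS (.inr (.inl (i, a)))) = 0 := by
  have hs : (Pi.single i (k4Fin a) : Fin n' → ZMod 2 × ZMod 2) + Pi.single i (k4Fin a) = 0 := by
    rw [← Pi.single_add, show k4Fin a + k4Fin a = 0 by fin_cases a <;> decide, Pi.single_zero]
  have h : embS (m := m) (n' := n') (n'' := n'') (.inr (.inl (i, a)))
      + embS (.inr (.inl (i, a))) = 0 := by
    show ((0, Pi.single i (k4Fin a), 0) : DoobVtx m n' n'')
      + (0, Pi.single i (k4Fin a), 0) = 0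
    simp [hs, Prod.mk_add_mk]
  rw [h, map_zero]

open Finset in
lemma master_count (hC : IsPerfectCode (DoobGraphZ m n' n'') (C : Set (DoobVtx m n' n'')))
    [DecidableEq ((DoobVtx m n' n'') ⧸ C)]
    (t : (DoobVtx m n' n'') ⧸ C) (ht : t ∈ (dbl ((DoobVtx m n' n'') ⧸ C)).range) :
    Nat.card (dbl ((DoobVtx m n' n'') ⧸ C)).ker =
      (if (0 : (DoobVtx m n' n'') ⧸ C) = t then 1 else 0)
      + (∑ i : Fin m, ∑ a : Fin 6, if ψ C i a = t then 1 else 0)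
      + (3 * n') * (if (0 : (DoobVtx m n' n'') ⧸ C) = t then 1 else 0)
      + (∑ j : Fin n'', ∑ a : Fin 3, if τ C j a = t then 1 else 0) := by
  have e1 : Nat.card {o : Option (BIdx m n' n'') // qmap C (embO o + embO o) = t}
      = Nat.card {x : (DoobVtx m n' n'') ⧸ C // x + x = t} := by
    apply Nat.card_eq_of_bijective
      (fun o => (⟨qmap C (embO o.1), by rw [← map_add]; exact o.2⟩ :
        {x : (DoobVtx m n' n'') ⧸ C // x + x = t}))
    constructor
    · rintro ⟨o1, h1⟩ ⟨o2, h2⟩ h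
      have hval : qmap C (embO o1) = qmap C (embO o2) := congrArg Subtype.val h
      exact Subtype.ext ((g_bijective hC).1 hval)
    · rintro ⟨x, hx⟩
      obtain ⟨o, ho⟩ := (g_bijective hC).2 x
      have ho' : qmap C (embO o) = x := ho
      refine ⟨⟨o, ?_⟩, Subtype.ext ho⟩
      rw [map_add, ho', hx]
  rw [← card_fiber_eq_card_ker t ht, ← e1, Nat.card_eq_fintype_card, Fintype.card_subtype,
    Finset.card_filter]
  rw [Fintype.sum_option, Fintype.sum_sum_type, Fintype.sum_sum_type, Fintype.sum_prod_type,
    Fintype.sum_prod_type, Fintype.sum_prod_type]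
  have hnone : (if qmap C (embO (m := m) (n' := n') (n'' := n'') none
      + embO none) = t then 1 else 0) = (if (0 : (DoobVtx m n' n'') ⧸ C) = t then 1 else 0) := by
    simp [embO]
  have hsh : ∀ (i : Fin m) (a : Fin 6),
      (if qmap C (embO (m := m) (n' := n') (n'' := n'') (some (.inl (i, a)))
        + embO (some (.inl (i, a)))) = t then 1 else 0)
      = (if ψ C i a = t then 1 else 0) := fun i a => rfl
  have hk4 : ∀ (i : Fin n') (a : Fin 3),
      (if qmap C (embO (m := m) (n' := n') (n'' := n'') (some (.inr (.inl (i, a))))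
        + embO (some (.inr (.inl (i, a))))) = t then 1 else 0)
      = (if (0 : (DoobVtx m n' n'') ⧸ C) = t then 1 else 0) := by
    intro i a
    congr 1
    rw [show embO (m := m) (n' := n') (n'' := n'') (some (.inr (.inl (i, a))))
      = embS (.inr (.inl (i, a))) from rfl, k4_double_zero]
  have hz4 : ∀ (j : Fin n'') (a : Fin 3),
      (if qmap C (embO (m := m) (n' := n') (n'' := n'') (some (.inr (.inr (j, a))))
        + embO (some (.inr (.inr (j, a))))) = t then 1 else 0)
      = (if τ C j a = t then 1 else 0) := fun j a => rfl
  simp only [hnone, hsh, hk4, hz4]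
  rw [Finset.sum_comm (γ := Fin n')]
  simp only [Finset.sum_const, Finset.card_univ, Fintype.card_fin, smul_eq_mul]
  ring
end Main
end DoobAux
namespace DoobAux
section Main
variable {m n' n'' : ℕ} {C : AddSubgroup (DoobVtx m n' n'')}

open Finset in
lemma count_pairs (hC : IsPerfectCode (DoobGraphZ m n' n'') (C : Set (DoobVtx m n' n'')))
    [DecidableEq ((DoobVtx m n' n'') ⧸ C)]
    (t : (DoobVtx m n' n'') ⧸ C) (ht : t ∈ (dbl ((DoobVtx m n' n'') ⧸ C)).range)
    (ht0 : t ≠ 0) :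
    Nat.card (dbl ((DoobVtx m n' n'') ⧸ C)).ker =
      2 * ((∑ i : Fin m, ((if ψ C i 0 = t then 1 else 0) + (if ψ C i 1 = t then 1 else 0)
          + (if ψ C i 2 = t then 1 else 0)))
        + ∑ j : Fin n'', if τ C j 0 = t then 1 else 0) := by
  have h0 : (if (0 : (DoobVtx m n' n'') ⧸ C) = t then 1 else 0) = 0 := by
    simp [Ne.symm ht0]
  rw [master_count hC t ht, h0]
  have hsh : ∀ i : Fin m, (∑ a : Fin 6, if ψ C i a = t then 1 else 0)
      = 2 * ((if ψ C i 0 = t then 1 else 0) + (if ψ C i 1 = t then 1 else 0)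
          + (if ψ C i 2 = t then 1 else 0)) := by
    intro i
    rw [Fin.sum_univ_six]
    rw [show ψ C i 3 = ψ C i 0 from ψ_neg_eq i 0, show ψ C i 4 = ψ C i 1 from ψ_neg_eq i 1,
      show ψ C i 5 = ψ C i 2 from ψ_neg_eq i 2]
    ring
  have hz4 : ∀ j : Fin n'', (∑ a : Fin 3, if τ C j a = t then 1 else 0)
      = 2 * (if τ C j 0 = t then 1 else 0) := by
    intro j
    rw [Fin.sum_univ_three, τ_one_eq_zero j, τ_neg_eq j, h0]
    ring
  rw [Finset.sum_congr rfl fun i _ => hsh i, Finset.sum_congr rfl fun j _ => hz4 j,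
    ← Finset.mul_sum, ← Finset.mul_sum]
  ring

open Finset in
lemma tau_sum_zero (hC : IsPerfectCode (DoobGraphZ m n' n'') (C : Set (DoobVtx m n' n'')))
    (M : ℕ) (hM : Nat.card (dbl ((DoobVtx m n' n'') ⧸ C)).ker = 2 * (2 * M)) :
    (∑ j : Fin n'', τ C j 0) = 0 := by
  classical
  letI : Fintype ((DoobVtx m n' n'') ⧸ C) := Fintype.ofFinite _
  set Q := (DoobVtx m n' n'') ⧸ C
  set s : Finset Q := (univ.filter (· ∈ (dbl Q).range)).erase 0 with hs
  have hmem : ∀ t : Q, t ∈ s ↔ (t ∈ (dbl Q).range ∧ t ≠ 0) := by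
    intro t
    rw [hs, mem_erase, mem_filter]
    exact ⟨fun h => ⟨h.2.2, h.1⟩, fun h => ⟨h.2, mem_univ t, h.1⟩⟩
  have hLP : ∀ t ∈ s,
      ((∑ i : Fin m, ((if ψ C i 0 = t then 1 else 0) + (if ψ C i 1 = t then 1 else 0)
          + (if ψ C i 2 = t then 1 else 0)))
        + ∑ j : Fin n'', if τ C j 0 = t then 1 else 0) = 2 * M := by
    intro t htm
    obtain ⟨ht, ht0⟩ := (hmem t).mp htm
    have := count_pairs hC t ht ht0
    omega
  -- the weighted sums
  have key : ∑ t ∈ s, (((∑ i : Fin m, ((if ψ C i 0 = t then 1 else 0)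
        + (if ψ C i 1 = t then 1 else 0) + (if ψ C i 2 = t then 1 else 0)))
        + ∑ j : Fin n'', if τ C j 0 = t then 1 else 0) : ℕ) • t
      = ∑ t ∈ s, (2 * M) • t := by
    exact Finset.sum_congr rfl fun t htm => by rw [hLP t htm]
  have hRzero : ∑ t ∈ s, (2 * M : ℕ) • t = 0 := by
    apply Finset.sum_eq_zero
    intro t htm
    obtain ⟨⟨x, hx⟩, -⟩ := (hmem t).mp htm
    have htt : t + t = 0 := by
      rw [← hx, dbl_apply]
      exact q_four_torsion x
    rw [mul_comm, mul_smul, two_smul, htt, smul_zero]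
  have indicator_sum : ∀ c : Q, c ∈ s → (∑ t ∈ s, (if c = t then 1 else 0 : ℕ) • t) = c := by
    intro c hc
    have : ∀ t ∈ s, ((if c = t then 1 else 0 : ℕ) • t) = (if c = t then t else 0) := by
      intro t _
      split_ifs
      · exact one_smul ℕ t
      · exact zero_smul ℕ t
    rw [Finset.sum_congr rfl this, Finset.sum_ite_eq s c (fun t => t), if_pos hc]
  have hpsi_mem : ∀ (i : Fin m) (a : Fin 6), ψ C i a ∈ s := by
    intro i a
    exact (hmem _).mpr ⟨ψ_mem_range i a, ψ_ne_zero hC i a⟩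
  have htau_mem : ∀ j : Fin n'', τ C j 0 ∈ s := by
    intro j
    exact (hmem _).mpr ⟨τ_mem_range j 0, τ_ne_zero hC j 0 (by decide)⟩
  -- split the left side
  have split : ∑ t ∈ s, (((∑ i : Fin m, ((if ψ C i 0 = t then 1 else 0)
        + (if ψ C i 1 = t then 1 else 0) + (if ψ C i 2 = t then 1 else 0)))
        + ∑ j : Fin n'', if τ C j 0 = t then 1 else 0) : ℕ) • t
      = (∑ i : Fin m, (ψ C i 0 + ψ C i 1 + ψ C i 2)) + ∑ j : Fin n'', τ C j 0 := by
    have expand : ∀ t : Q, (((∑ i : Fin m, ((if ψ C i 0 = t then 1 else 0)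
          + (if ψ C i 1 = t then 1 else 0) + (if ψ C i 2 = t then 1 else 0)))
          + ∑ j : Fin n'', if τ C j 0 = t then 1 else 0) : ℕ) • t
        = (∑ i : Fin m, ((if ψ C i 0 = t then 1 else 0 : ℕ) • t
            + (if ψ C i 1 = t then 1 else 0 : ℕ) • t + (if ψ C i 2 = t then 1 else 0 : ℕ) • t))
          + ∑ j : Fin n'', (if τ C j 0 = t then 1 else 0 : ℕ) • t := by
      intro t
      rw [add_smul, Finset.sum_smul, Finset.sum_smul]
      congr 1
      exact Finset.sum_congr rfl fun i _ => by rw [add_smul, add_smul]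
    rw [Finset.sum_congr rfl fun t _ => expand t]
    rw [Finset.sum_add_distrib]
    congr 1
    · rw [Finset.sum_comm]
      refine Finset.sum_congr rfl fun i _ => ?_
      rw [Finset.sum_add_distrib, Finset.sum_add_distrib]
      rw [indicator_sum _ (hpsi_mem i 0), indicator_sum _ (hpsi_mem i 1),
        indicator_sum _ (hpsi_mem i 2)]
    · rw [Finset.sum_comm]
      exact Finset.sum_congr rfl fun j _ => indicator_sum _ (htau_mem j)
  have hpsi_zero : (∑ i : Fin m, (ψ C i 0 + ψ C i 1 + ψ C i 2)) = 0 := by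
    apply Finset.sum_eq_zero
    intro i _
    rw [ψ_add i, ψ_tors i 2]
  rw [split, hpsi_zero, zero_add] at key
  rw [key, hRzero]

end Main
end DoobAux
namespace DoobAux
section Main
variable {m n' n'' : ℕ} {C : AddSubgroup (DoobVtx m n' n'')}

lemma τ_fold (j : Fin n'') :
    τ C j 0 = qmap C (embS (m := m) (n' := n') (n'' := n'') (.inr (.inr (j, 1)))) := by
  rw [τ_def]
  congr 1
  show ((0, 0, Pi.single j (z4Fin 0)) : DoobVtx m n' n'')
      + (0, 0, Pi.single j (z4Fin 0)) = (0, 0, Pi.single j (z4Fin 1))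
  have hs : (Pi.single j (z4Fin 0) : Fin n'' → ZMod 4) + Pi.single j (z4Fin 0)
      = Pi.single j (z4Fin 1) := by
    rw [← Pi.single_add]
    congr 1
  simp [Prod.mk_add_mk, hs]

end Main
end DoobAux

theorem additive_perfect_code_parameters (m n' n'' : ℕ) (hm : 1 ≤ m)
    (C : AddSubgroup (DoobVtx m n' n''))
    (hC : IsPerfectCode (DoobGraphZ m n' n'') (C : Set (DoobVtx m n' n''))) :
    n'' ≠ 1 ∧ ∃ Γ Δ : ℕ, Even Γ ∧ 2 ≤ Δ ∧
      3 * (2 * m + n' + n'') + 1 = 2 ^ (Γ + 2 * Δ) ∧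
      3 * n' + n'' + 1 = 2 ^ (Γ + Δ) ∧
      n'' + 1 ≤ 2 ^ Δ := by
  classical
  open DoobAux Finset in
  refine ?_
  letI : Fintype ((DoobVtx m n' n'') ⧸ C) := Fintype.ofFinite _
  set Q := (DoobVtx m n' n'') ⧸ C with hQdef
  set K := (dbl Q).ker with hKdef
  set R := (dbl Q).range with hRdef
  -- cardinality of the quotient
  have hcardQ : Nat.card Q = 6 * m + 3 * n' + 3 * n'' + 1 := by
    rw [← Nat.card_eq_of_bijective _ (g_bijective hC), Nat.card_eq_fintype_card]
    simp
    try ring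
  -- cardinality of the kernel (2-torsion subgroup)
  have hcardK : Nat.card K = 3 * n' + n'' + 1 := by
    have h0R : (0 : Q) ∈ R := ⟨0, map_zero _⟩
    have hmc := master_count hC 0 h0R
    have hψ : (∑ i : Fin m, ∑ a : Fin 6, if ψ C i a = 0 then 1 else 0) = 0 :=
      Finset.sum_eq_zero fun i _ =>
        Finset.sum_eq_zero fun a _ => if_neg (ψ_ne_zero hC i a)
    have hτ : ∀ j : Fin n'', (∑ a : Fin 3, if τ C j a = 0 then 1 else 0) = 1 := by
      intro j
      rw [Fin.sum_univ_three, if_neg (τ_ne_zero hC j 0 (by decide)),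
        if_pos (τ_one_eq_zero j), τ_neg_eq j, if_neg (τ_ne_zero hC j 0 (by decide))]
    rw [hmc, hψ, if_pos rfl, Finset.sum_congr rfl fun j _ => hτ j]
    simp
    try ring
  -- the ambient space is a 2-group
  have hV : Nat.card (DoobVtx m n' n'') = 2 ^ (4 * m + 2 * n' + 2 * n'') := by
    rw [Nat.card_eq_fintype_card]
    simp
    rw [show (16 : ℕ) = 2 ^ 4 by norm_num, show (4 : ℕ) = 2 ^ 2 by norm_num,
      ← pow_mul, ← pow_mul, ← pow_mul, ← pow_add, ← pow_add]
    ring_nf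
  have hQdvd : Nat.card Q ∣ 2 ^ (4 * m + 2 * n' + 2 * n'') := by
    rw [← hV, AddSubgroup.card_eq_card_quotient_mul_card_addSubgroup C]
    exact Dvd.intro _ rfl
  obtain ⟨E, -, hEK⟩ := (Nat.dvd_prime_pow Nat.prime_two).mp
    ((AddSubgroup.card_addSubgroup_dvd_card K).trans hQdvd)
  obtain ⟨Δ, -, hΔR⟩ := (Nat.dvd_prime_pow Nat.prime_two).mp
    ((AddSubgroup.card_addSubgroup_dvd_card R).trans hQdvd)
  have hRK : R ≤ K := by
    rintro x ⟨y, rfl⟩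
    rw [AddMonoidHom.mem_ker, dbl_apply, dbl_apply]
    exact q_four_torsion y
  have hΔE : Δ ≤ E := by
    have := AddSubgroup.card_dvd_of_le hRK
    rw [hEK, hΔR] at this
    exact (Nat.pow_dvd_pow_iff_le_right one_lt_two).mp this
  have hQKR : Nat.card Q = Nat.card R * Nat.card K := by
    rw [AddSubgroup.card_eq_card_quotient_mul_card_addSubgroup K,
      Nat.card_congr (QuotientAddGroup.quotientKerEquivRange (dbl Q)).toEquiv]
  have hmain : 2 ^ (Δ + E) = 6 * m + 3 * n' + 3 * n'' + 1 := by
    rw [pow_add, ← hΔR, ← hEK, ← hQKR, hcardQ]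
  -- Δ ≥ 2 via four distinct elements of R
  have hΔ2 : 2 ≤ Δ := by
    set i₀ : Fin m := ⟨0, hm⟩
    have hne0 : ∀ a, ψ C i₀ a ≠ 0 := ψ_ne_zero hC i₀
    have h01 : ψ C i₀ 0 ≠ ψ C i₀ 1 := fun h =>
      hne0 2 (by rw [← ψ_add i₀, h]; exact ψ_tors i₀ 1)
    have h02 : ψ C i₀ 0 ≠ ψ C i₀ 2 := by
      intro h
      have h2 := ψ_add (C := C) i₀
      rw [← h] at h2
      exact hne0 1 (add_eq_left.mp h2)
    have h12 : ψ C i₀ 1 ≠ ψ C i₀ 2 := by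
      intro h
      have h2 := ψ_add (C := C) i₀
      rw [← h, add_comm] at h2
      exact hne0 0 (add_eq_left.mp h2)
    set vals : Fin 4 → Q := ![0, ψ C i₀ 0, ψ C i₀ 1, ψ C i₀ 2] with hvals
    set f : Fin 4 → R := ![⟨0, R.zero_mem⟩, ⟨ψ C i₀ 0, ψ_mem_range i₀ 0⟩,
      ⟨ψ C i₀ 1, ψ_mem_range i₀ 1⟩, ⟨ψ C i₀ 2, ψ_mem_range i₀ 2⟩] with hf
    have hfv : ∀ a : Fin 4, (f a).1 = vals a := by
      intro a
      fin_cases a <;> rfl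
    have key : ∀ a b : Fin 4, vals a = vals b → a = b := by
      intro a b
      fin_cases a <;> fin_cases b <;> intro hab <;>
        first
          | rfl
          | exact absurd hab (Ne.symm (hne0 0))
          | exact absurd hab (Ne.symm (hne0 1))
          | exact absurd hab (Ne.symm (hne0 2))
          | exact absurd hab (hne0 0)
          | exact absurd hab (hne0 1)
          | exact absurd hab (hne0 2)
          | exact absurd hab h01
          | exact absurd hab (Ne.symm h01)
          | exact absurd hab h02
          | exact absurd hab (Ne.symm h02)
          | exact absurd hab h12
          | exact absurd hab (Ne.symm h12)
    have hinj4 : Function.Injective f := by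
      intro a b hab
      exact key a b (by rw [← hfv a, ← hfv b]; exact congrArg Subtype.val hab)
    have hle : 4 ≤ Nat.card R := by
      have := Nat.card_le_card_of_injective f hinj4
      rwa [Nat.card_eq_fintype_card (α := Fin 4), Fintype.card_fin] at this
    rw [hΔR] at hle
    by_contra hcon
    have h1 : Δ ≤ 1 := by omega
    have := Nat.pow_le_pow_right (show 0 < 2 by norm_num) h1
    omega
  -- Γ and parity
  set Γ := E - Δ with hΓdef
  have hmod : ∀ s : ℕ, 2 ^ s % 3 = if s % 2 = 0 then 1 else 2 := by
    intro s
    induction s with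
    | zero => rfl
    | succ n ih =>
      rw [pow_succ]
      by_cases h : n % 2 = 0
      · rw [if_pos h] at ih
        rw [if_neg (by omega)]
        omega
      · rw [if_neg h] at ih
        rw [if_pos (by omega)]
        omega
  have hpar : (Δ + E) % 2 = 0 := by
    have h3 := hmod (Δ + E)
    rw [hmain] at h3
    by_cases hp : (Δ + E) % 2 = 0
    · exact hp
    · rw [if_neg hp] at h3
      omega
  refine ⟨?_, Γ, Δ, ?_, hΔ2, ?_, ?_, ?_⟩
  · -- n'' ≠ 1
    intro h1
    have hE2 : 2 ≤ E := le_trans hΔ2 hΔE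
    have hM : Nat.card K = 2 * (2 * 2 ^ (E - 2)) := by
      obtain ⟨E', hEe⟩ : ∃ E', E = E' + 2 := ⟨E - 2, by omega⟩
      rw [hEK, hEe, Nat.add_sub_cancel]
      ring
    have hsum := tau_sum_zero hC (2 ^ (E - 2)) hM
    subst h1
    rw [Fin.sum_univ_one] at hsum
    exact τ_ne_zero hC 0 0 (by decide) hsum
  · rw [Nat.even_iff, hΓdef]
    omega
  · rw [show Γ + 2 * Δ = Δ + E by omega, hmain]
    ring
  · rw [show Γ + Δ = E by omega, ← hEK, hcardK]
  · -- n'' + 1 ≤ 2 ^ Δ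
    have hinj : Function.Injective (fun o : Option (Fin n'') =>
        (Option.elim o (⟨0, R.zero_mem⟩ : R) (fun j => ⟨τ C j 0, τ_mem_range j 0⟩))) := by
      rintro (_ | j) (_ | j') h
      · rfl
      · exact absurd (congrArg Subtype.val h).symm (τ_ne_zero hC j' 0 (by decide))
      · exact absurd (congrArg Subtype.val h) (τ_ne_zero hC j 0 (by decide))
      · have hval : τ C j 0 = τ C j' 0 := congrArg Subtype.val h
        rw [τ_fold, τ_fold] at hval
        have := (g_bijective hC).1 (show (fun o => qmap C (embO o))
            (some (.inr (.inr (j, 1)))) = (fun o => qmap C (embO o))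
            (some (.inr (.inr (j', 1)))) from hval)
        simpa using this
    have hle := Nat.card_le_card_of_injective _ hinj
    rw [Nat.card_eq_fintype_card (α := Option (Fin n'')), hΔR] at hle
    simpa using hle
end

section
/- Let k, r ≥ 1 be integers. For each pair (i,j) with 1 ≤ i ≤ k and 1 ≤ j ≤ r, let f_{i,j}, g_{i,j} : E2^3 → E2 be functions such that the set C_{i,j} = {(x̄, f_{i,j}(x̄), g_{i,j}(x̄)) : x̄ ∈ E2^3} is a 1-perfect code in the Hamming graph H(5,4). Define f : (E2^3)^{k×r} → E2^k by f(x)_i = Σ_{j=1}^r f_{i,j}(x_{i,j}) and g : (E2^3)^{k×r} → E2^r by g(x)_j = Σ_{i=1}^k g_{i,j}(x_{i,j}). Let C' ⊆ E2^k and C'' ⊆ E2^r be 1-perfect codes in the Hamming graphs H(k,4) and H(r,4) respectively. Then the set C = {(x, f(x)+c', g(x)+c'') : x ∈ (E2^3)^{k×r}, c' ∈ C', c'' ∈ C''} is a 1-perfect code in the Hamming graph H(3kr+k+r, 4) on vertex set (E2^3)^{k×r} × E2^k × E2^r. -/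
open SimpleGraph Polynomial

/-- The Galois ring `GR(4²)`, realized as the quotient ring
`(ZMod 4)[X]/(X² + X + 1)`. -/
abbrev E4 : Type := AdjoinRoot (X ^ 2 + X + 1 : Polynomial (ZMod 4))

/-- The Galois field `GF(4)`, realized as `(ZMod 2)[X]/(X² + X + 1)`. -/
abbrev E2 : Type := AdjoinRoot (X ^ 2 + X + 1 : Polynomial (ZMod 2))

/-- `ω`, the image of `X` in `E4`. -/
noncomputable def ω4 : E4 := AdjoinRoot.root (X ^ 2 + X + 1 : Polynomial (ZMod 4))

/-- `ω`, the image of `X` in `E2`. -/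
noncomputable def ω2 : E2 := AdjoinRoot.root (X ^ 2 + X + 1 : Polynomial (ZMod 2))

/-- The set `ε = {1, ω, ω², −1, −ω, −ω²} ⊆ E4`. -/
def epsE4 : Set E4 := {1, ω4, ω4 ^ 2, -1, -ω4, -ω4 ^ 2}

/-- The Shrikhande graph on the 16 elements of `E4`: two vertices are adjacent
iff their difference lies in `ε`. -/
def ShE : SimpleGraph E4 := SimpleGraph.fromRel fun a b => a - b ∈ epsE4

/-- The Hamming graph `H(n,4)` on `n`-tuples over `E2`. -/
def HamE (n : ℕ) : SimpleGraph (Fin n → E2) :=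
  boxPi fun _ : Fin n => (⊤ : SimpleGraph E2)

/-- The Hamming graph `H(5,4)`, on the vertex set `E2³ × E2 × E2`. -/
def H5 : SimpleGraph ((Fin 3 → E2) × E2 × E2) :=
  (boxPi fun _ : Fin 3 => (⊤ : SimpleGraph E2)) □
    ((⊤ : SimpleGraph E2) □ (⊤ : SimpleGraph E2))

/-- The Hamming graph `H(3kr + k + r, 4)`, on the vertex set
`(E2³)^{k×r} × E2^k × E2^r`. -/
def Hbig (k r : ℕ) :
    SimpleGraph ((Fin k × Fin r → (Fin 3 → E2)) × (Fin k → E2) × (Fin r → E2)) :=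
  (boxPi fun _ : Fin k × Fin r => boxPi fun _ : Fin 3 => (⊤ : SimpleGraph E2)) □
    (HamE k □ HamE r)
lemma boxPi_adj {ι : Type*} {V : ι → Type*} (G : ∀ i, SimpleGraph (V i)) (x y : ∀ i, V i) :
    (boxPi G).Adj x y ↔ ∃ i, (G i).Adj (x i) (y i) ∧ ∀ j, j ≠ i → x j = y j := Iff.rfl

abbrev Ham3 : SimpleGraph (Fin 3 → E2) := boxPi fun _ : Fin 3 => (⊤ : SimpleGraph E2)

lemma hamE_adj {n : ℕ} {u v : Fin n → E2} :
    (HamE n).Adj u v ↔ ∃ i, u i ≠ v i ∧ ∀ j, j ≠ i → u j = v j := by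
  simp only [HamE, boxPi_adj, top_adj]

lemma factA {F G : (Fin 3 → E2) → E2}
    (h : IsPerfectCode H5 {p : (Fin 3 → E2) × E2 × E2 | ∃ x, p = (x, F x, G x)})
    {x y : Fin 3 → E2} (hadj : Ham3.Adj y x) :
    F x ≠ F y ∧ G x ≠ G y := by
  have hxy : x ≠ y := hadj.ne.symm
  have key : ¬(F x = F y ∨ G x = G y) := by
    intro hor
    obtain ⟨c, -, hu⟩ := h (y, F x, G x)
    have e1 : ((x, F x, G x) : (Fin 3 → E2) × E2 × E2) = c :=
      hu _ ⟨⟨x, rfl⟩, Or.inr (SimpleGraph.boxProd_adj.mpr (Or.inl ⟨hadj, rfl⟩))⟩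
    have e2 : ((y, F y, G y) : (Fin 3 → E2) × E2 × E2) = c := by
      refine hu _ ⟨⟨y, rfl⟩, ?_⟩
      rcases hor with hF | hG
      · by_cases hG : G x = G y
        · exact Or.inl (by rw [hF, hG])
        · exact Or.inr (SimpleGraph.boxProd_adj.mpr (Or.inr
            ⟨SimpleGraph.boxProd_adj.mpr (Or.inr ⟨(top_adj _ _).mpr hG, hF⟩), rfl⟩))
      · by_cases hF : F x = F y
        · exact Or.inl (by rw [hF, hG])
        · exact Or.inr (SimpleGraph.boxProd_adj.mpr (Or.inr
            ⟨SimpleGraph.boxProd_adj.mpr (Or.inl ⟨(top_adj _ _).mpr hF, hG⟩), rfl⟩))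
    exact hxy (congrArg Prod.fst (e1.trans e2.symm))
  exact ⟨fun hF => key (Or.inl hF), fun hG => key (Or.inr hG)⟩

lemma factB {F G : (Fin 3 → E2) → E2}
    (h : IsPerfectCode H5 {p : (Fin 3 → E2) × E2 × E2 | ∃ x, p = (x, F x, G x)})
    {y : Fin 3 → E2} {a b : E2} (ha : a ≠ F y) (hb : b ≠ G y) :
    ∃! x, Ham3.Adj y x ∧ F x = a ∧ G x = b := by
  obtain ⟨c, ⟨hcC, hcov⟩, hu⟩ := h (y, a, b)
  obtain ⟨x, rfl⟩ := hcC
  have hx : Ham3.Adj y x ∧ F x = a ∧ G x = b := by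
    rcases hcov with heq | hadj
    · have h1 : y = x := congrArg Prod.fst heq
      have h2 : a = F x := congrArg (fun p => p.2.1) heq
      exact absurd (h2.trans (congrArg F h1.symm)) ha
    · rcases SimpleGraph.boxProd_adj.mp hadj with ⟨h3, hpair⟩ | ⟨hpadj, hyx⟩
      · exact ⟨h3, (congrArg Prod.fst hpair).symm, (congrArg Prod.snd hpair).symm⟩
      · have hyx' : y = x := hyx
        rcases SimpleGraph.boxProd_adj.mp hpadj with ⟨hne, heq2⟩ | ⟨hne, heq2⟩
        · exact absurd ((show b = G x from heq2).trans (congrArg G hyx'.symm)) hb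
        · exact absurd ((show a = F x from heq2).trans (congrArg F hyx'.symm)) ha
  refine ⟨x, hx, fun x' hx' => ?_⟩
  have := hu (x', F x', G x') ⟨⟨x', rfl⟩,
    Or.inr (SimpleGraph.boxProd_adj.mpr (Or.inl ⟨hx'.1, by rw [hx'.2.1, hx'.2.2]⟩))⟩
  exact congrArg Prod.fst this

noncomputable def Fsum {k r : ℕ} (f : Fin k → Fin r → (Fin 3 → E2) → E2)
    (x : Fin k × Fin r → (Fin 3 → E2)) (i : Fin k) : E2 :=
  ∑ j : Fin r, f i j (x (i, j))

noncomputable def Gsum {k r : ℕ} (g : Fin k → Fin r → (Fin 3 → E2) → E2)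
    (x : Fin k × Fin r → (Fin 3 → E2)) (j : Fin r) : E2 :=
  ∑ i : Fin k, g i j (x (i, j))

lemma Fsum_off {k r : ℕ} (f : Fin k → Fin r → (Fin 3 → E2) → E2)
    {x y : Fin k × Fin r → (Fin 3 → E2)} {mi : Fin k} {mj : Fin r}
    (h : ∀ m', m' ≠ (mi, mj) → x m' = y m') {i : Fin k} (hi : i ≠ mi) :
    Fsum f x i = Fsum f y i :=
  Finset.sum_congr rfl fun j _ => by
    rw [h (i, j) (fun he => hi (congrArg Prod.fst he))]

lemma Gsum_off {k r : ℕ} (g : Fin k → Fin r → (Fin 3 → E2) → E2)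
    {x y : Fin k × Fin r → (Fin 3 → E2)} {mi : Fin k} {mj : Fin r}
    (h : ∀ m', m' ≠ (mi, mj) → x m' = y m') {j : Fin r} (hj : j ≠ mj) :
    Gsum g x j = Gsum g y j :=
  Finset.sum_congr rfl fun i _ => by
    rw [h (i, j) (fun he => hj (congrArg Prod.snd he))]

lemma Fsum_at {k r : ℕ} (f : Fin k → Fin r → (Fin 3 → E2) → E2)
    {x y : Fin k × Fin r → (Fin 3 → E2)} {mi : Fin k} {mj : Fin r}
    (h : ∀ m', m' ≠ (mi, mj) → x m' = y m') :
    Fsum f x mi = Fsum f y mi + (f mi mj (x (mi, mj)) - f mi mj (y (mi, mj))) := by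
  have key : ∑ j : Fin r, (f mi j (x (mi, j)) - f mi j (y (mi, j)))
      = f mi mj (x (mi, mj)) - f mi mj (y (mi, mj)) := by
    refine Finset.sum_eq_single mj (fun j _ hj => ?_) (by simp)
    rw [h (mi, j) (fun he => hj (congrArg Prod.snd he)), sub_self]
  unfold Fsum
  rw [← key, Finset.sum_sub_distrib]
  ring

lemma Gsum_at {k r : ℕ} (g : Fin k → Fin r → (Fin 3 → E2) → E2)
    {x y : Fin k × Fin r → (Fin 3 → E2)} {mi : Fin k} {mj : Fin r}
    (h : ∀ m', m' ≠ (mi, mj) → x m' = y m') :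
    Gsum g x mj = Gsum g y mj + (g mi mj (x (mi, mj)) - g mi mj (y (mi, mj))) := by
  have key : ∑ i : Fin k, (g i mj (x (i, mj)) - g i mj (y (i, mj)))
      = g mi mj (x (mi, mj)) - g mi mj (y (mi, mj)) := by
    refine Finset.sum_eq_single mi (fun i _ hi => ?_) (by simp)
    rw [h (i, mj) (fun he => hi (congrArg Prod.fst he)), sub_self]
  unfold Gsum
  rw [← key, Finset.sum_sub_distrib]
  ring
theorem perfect_code_product_construction (k r : ℕ) (hk : 1 ≤ k) (hr : 1 ≤ r)
    (f g : Fin k → Fin r → (Fin 3 → E2) → E2)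
    (hfg : ∀ i j, IsPerfectCode H5
      {p : (Fin 3 → E2) × E2 × E2 | ∃ x : Fin 3 → E2, p = (x, f i j x, g i j x)})
    (C' : Set (Fin k → E2)) (hC' : IsPerfectCode (HamE k) C')
    (C'' : Set (Fin r → E2)) (hC'' : IsPerfectCode (HamE r) C'') :
    IsPerfectCode (Hbig k r)
      {p : (Fin k × Fin r → (Fin 3 → E2)) × (Fin k → E2) × (Fin r → E2) |
        ∃ (x : Fin k × Fin r → (Fin 3 → E2)) (c' : Fin k → E2) (c'' : Fin r → E2),
          c' ∈ C' ∧ c'' ∈ C'' ∧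
          p = (x, fun i => (∑ j : Fin r, f i j (x (i, j))) + c' i,
                  fun j => (∑ i : Fin k, g i j (x (i, j))) + c'' j)} := by
  intro v
  obtain ⟨y, a, b⟩ := v
  set α : Fin k → E2 := fun i => a i - Fsum f y i with hα
  set β : Fin r → E2 := fun j => b j - Gsum g y j with hβ
  have hαd : ∀ i, α i = a i - Fsum f y i := fun _ => rfl
  have hβd : ∀ j, β j = b j - Gsum g y j := fun _ => rfl
  obtain ⟨c1, ⟨hc1C, hc1cov⟩, hc1u⟩ := hC' α
  obtain ⟨c2, ⟨hc2C, hc2cov⟩, hc2u⟩ := hC'' β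
  have hay : a = fun i => Fsum f y i + α i := by
    funext i; have := hαd i; linear_combination -this
  have hby : b = fun j => Gsum g y j + β j := by
    funext j; have := hβd j; linear_combination -this
  -- classification of covering codewords
  have classify : ∀ (x : Fin k × Fin r → Fin 3 → E2) (c' : Fin k → E2) (c'' : Fin r → E2),
      c' ∈ C' → c'' ∈ C'' →
      (((y, a, b) : (Fin k × Fin r → Fin 3 → E2) × (Fin k → E2) × (Fin r → E2)) =
          (x, fun i => Fsum f x i + c' i, fun j => Gsum g x j + c'' j) ∨
        (Hbig k r).Adj (y, a, b)
          (x, fun i => Fsum f x i + c' i, fun j => Gsum g x j + c'' j)) →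
      (x = y ∧ c' = α ∧ c'' = β) ∨
      (x = y ∧ c' = c1 ∧ c1 ≠ α ∧ c'' = β) ∨
      (x = y ∧ c' = α ∧ c'' = c2 ∧ c2 ≠ β) ∨
      (c' = c1 ∧ c1 ≠ α ∧ c'' = c2 ∧ c2 ≠ β ∧
        ∃ mi mj, (∀ m', m' ≠ (mi, mj) → x m' = y m') ∧
          Ham3.Adj (y (mi, mj)) (x (mi, mj)) ∧
          c1 mi = α mi + (f mi mj (y (mi, mj)) - f mi mj (x (mi, mj))) ∧
          c2 mj = β mj + (g mi mj (y (mi, mj)) - g mi mj (x (mi, mj)))) := by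
    intro x c' c'' hc' hc'' hcov
    rcases hcov with heq | hadj
    · -- distance 0
      have hx : x = y := (congrArg Prod.fst heq).symm
      subst hx
      have hA : a = fun i => Fsum f x i + c' i := congrArg (fun p => p.2.1) heq
      have hB : b = fun j => Gsum g x j + c'' j := congrArg (fun p => p.2.2) heq
      left
      refine ⟨rfl, funext fun i => ?_, funext fun j => ?_⟩
      · show c' i = a i - Fsum f x i
        simp only [hA]; ring
      · show c'' j = b j - Gsum g x j
        simp only [hB]; ring
    · rcases SimpleGraph.boxProd_adj.mp hadj with ⟨hbig, hpair⟩ | ⟨hpadj, hx⟩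
      · -- x-block
        obtain ⟨m, h3, hoff⟩ := hbig
        obtain ⟨mi, mj⟩ := m
        have hoff' : ∀ m', m' ≠ (mi, mj) → x m' = y m' := fun m' hm' => (hoff m' hm').symm
        have h3' : Ham3.Adj (y (mi, mj)) (x (mi, mj)) := h3
        have hA : a = fun i => Fsum f x i + c' i := congrArg Prod.fst hpair
        have hB : b = fun j => Gsum g x j + c'' j := congrArg Prod.snd hpair
        have hfa := factA (hfg mi mj) h3'
        have hc'eq : ∀ i, i ≠ mi → c' i = α i := by
          intro i hi
          show c' i = a i - Fsum f y i
          rw [← Fsum_off f hoff' hi]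
          simp only [hA]; ring
        have hc'mi : c' mi = α mi + (f mi mj (y (mi, mj)) - f mi mj (x (mi, mj))) := by
          have h1 : a mi = Fsum f x mi + c' mi := by simp only [hA]
          rw [Fsum_at f hoff'] at h1
          have h2 := hαd mi
          linear_combination -h1 + h2
        have hne' : c' mi ≠ α mi := by
          rw [hc'mi]
          intro hcon
          have h0 : f mi mj (y (mi, mj)) - f mi mj (x (mi, mj)) = 0 := by
            linear_combination hcon
          exact hfa.1 (sub_eq_zero.mp h0).symm
        have hadjα : (HamE k).Adj α c' :=
          hamE_adj.mpr ⟨mi, fun hcon => hne' hcon.symm, fun i hi => (hc'eq i hi).symm⟩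
        have hcc1 : c' = c1 := hc1u c' ⟨hc', Or.inr hadjα⟩
        have hc1ne : c1 ≠ α := fun h => hne' (by rw [hcc1, h])
        -- g side
        have hc''eq : ∀ j, j ≠ mj → c'' j = β j := by
          intro j hj
          show c'' j = b j - Gsum g y j
          rw [← Gsum_off g hoff' hj]
          simp only [hB]; ring
        have hc''mj : c'' mj = β mj + (g mi mj (y (mi, mj)) - g mi mj (x (mi, mj))) := by
          have h1 : b mj = Gsum g x mj + c'' mj := by simp only [hB]
          rw [Gsum_at g hoff'] at h1
          have h2 := hβd mj
          linear_combination -h1 + h2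
        have hne'' : c'' mj ≠ β mj := by
          rw [hc''mj]
          intro hcon
          have h0 : g mi mj (y (mi, mj)) - g mi mj (x (mi, mj)) = 0 := by
            linear_combination hcon
          exact hfa.2 (sub_eq_zero.mp h0).symm
        have hadjβ : (HamE r).Adj β c'' :=
          hamE_adj.mpr ⟨mj, fun hcon => hne'' hcon.symm, fun j hj => (hc''eq j hj).symm⟩
        have hcc2 : c'' = c2 := hc2u c'' ⟨hc'', Or.inr hadjβ⟩
        have hc2ne : c2 ≠ β := fun h => hne'' (by rw [hcc2, h])
        exact Or.inr (Or.inr (Or.inr ⟨hcc1, hc1ne, hcc2, hc2ne, mi, mj, hoff', h3',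
          by rw [← hcc1]; exact hc'mi, by rw [← hcc2]; exact hc''mj⟩))
      · -- second block
        have hx' : x = y := (show y = x from hx).symm
        subst hx'
        rcases SimpleGraph.boxProd_adj.mp hpadj with ⟨hka, hbeq⟩ | ⟨hrb, haeq⟩
        · -- a-part
          have hbeq' : b = fun j => Gsum g x j + c'' j := hbeq
          have hc''β : c'' = β := by
            funext j
            show c'' j = b j - Gsum g x j
            simp only [hbeq']; ring
          have hka' : (HamE k).Adj a fun i => Fsum f x i + c' i := hka
          obtain ⟨i, hne, hoffi⟩ := hamE_adj.mp hka'
          have hadjα : (HamE k).Adj α c' := by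
            refine hamE_adj.mpr ⟨i, fun hcon => hne ?_, fun i' hi' => ?_⟩
            · have hcon' : a i - Fsum f x i = c' i := hcon
              linear_combination hcon'
            · have h' := hoffi i' hi'
              show a i' - Fsum f x i' = c' i'
              linear_combination h'
          have hcc1 : c' = c1 := hc1u c' ⟨hc', Or.inr hadjα⟩
          have hc1ne : c1 ≠ α := fun h => hadjα.ne ((hcc1.trans h).symm)
          exact Or.inr (Or.inl ⟨rfl, hcc1, hc1ne, hc''β⟩)
        · -- b-part
          have haeq' : a = fun i => Fsum f x i + c' i := haeq
          have hc'α : c' = α := by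
            funext i
            show c' i = a i - Fsum f x i
            simp only [haeq']; ring
          have hrb' : (HamE r).Adj b fun j => Gsum g x j + c'' j := hrb
          obtain ⟨j, hne, hoffj⟩ := hamE_adj.mp hrb'
          have hadjβ : (HamE r).Adj β c'' := by
            refine hamE_adj.mpr ⟨j, fun hcon => hne ?_, fun j' hj' => ?_⟩
            · have hcon' : b j - Gsum g x j = c'' j := hcon
              linear_combination hcon'
            · have h' := hoffj j' hj'
              show b j' - Gsum g x j' = c'' j'
              linear_combination h'
          have hcc2 : c'' = c2 := hc2u c'' ⟨hc'', Or.inr hadjβ⟩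
          have hc2ne : c2 ≠ β := fun h => hadjβ.ne ((hcc2.trans h).symm)
          exact Or.inr (Or.inr (Or.inl ⟨rfl, hc'α, hcc2, hc2ne⟩))
  by_cases h1 : c1 = α <;> by_cases h2 : c2 = β
  · -- case 1 : distance 0
    refine ⟨(y, a, b), ⟨⟨y, α, β, h1 ▸ hc1C, h2 ▸ hc2C, ?_⟩, Or.inl rfl⟩, ?_⟩
    · exact Prod.ext rfl (Prod.ext hay hby)
    · rintro p ⟨⟨x, c', c'', hc', hc'', rfl⟩, hcov⟩
      rcases classify x c' c'' hc' hc'' hcov with ⟨hx, h', h''⟩ | ⟨-, -, hne, -⟩ |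
        ⟨-, -, -, hne⟩ | ⟨-, hne, -⟩
      · subst hx; subst h'; subst h''
        exact Prod.ext rfl (Prod.ext hay.symm hby.symm)
      · exact absurd h1 hne
      · exact absurd h2 hne
      · exact absurd h1 hne
  · -- case 2 : c1 = α, c2 ≠ β ; move in b-part
    have hadj2 : (HamE r).Adj β c2 := by
      rcases hc2cov with h | h
      · exact absurd h.symm h2
      · exact h
    obtain ⟨j₀, hj₀, hoffj₀⟩ := hamE_adj.mp hadj2
    refine ⟨(y, a, fun j => Gsum g y j + c2 j), ⟨⟨y, α, c2, h1 ▸ hc1C, hc2C, ?_⟩,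
      Or.inr ?_⟩, ?_⟩
    · exact Prod.ext rfl (Prod.ext hay rfl)
    · refine SimpleGraph.boxProd_adj.mpr (Or.inr
        ⟨SimpleGraph.boxProd_adj.mpr (Or.inr ⟨?_, rfl⟩), rfl⟩)
      refine hamE_adj.mpr ⟨j₀, fun hcon => hj₀ ?_, fun j hj => ?_⟩
      · show b j₀ - Gsum g y j₀ = c2 j₀
        linear_combination hcon
      · have h' := hoffj₀ j hj
        have h'' : b j - Gsum g y j = c2 j := h'
        linear_combination h''
    · rintro p ⟨⟨x, c', c'', hc', hc'', rfl⟩, hcov⟩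
      rcases classify x c' c'' hc' hc'' hcov with ⟨-, -, h''⟩ | ⟨-, -, -, h''⟩ |
        ⟨hx, h', h'', -⟩ | ⟨-, hne, -⟩
      · exact absurd (hc2u β ⟨h'' ▸ hc'', Or.inl rfl⟩).symm h2
      · exact absurd (hc2u β ⟨h'' ▸ hc'', Or.inl rfl⟩).symm h2
      · subst hx; subst h'; subst h''
        exact Prod.ext rfl (Prod.ext hay.symm rfl)
      · exact absurd h1 hne
  · -- case 3 : c1 ≠ α, c2 = β ; move in a-part
    have hadj1 : (HamE k).Adj α c1 := by
      rcases hc1cov with h | h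
      · exact absurd h.symm h1
      · exact h
    obtain ⟨i₀, hi₀, hoffi₀⟩ := hamE_adj.mp hadj1
    refine ⟨(y, fun i => Fsum f y i + c1 i, b), ⟨⟨y, c1, β, hc1C, h2 ▸ hc2C, ?_⟩,
      Or.inr ?_⟩, ?_⟩
    · exact Prod.ext rfl (Prod.ext rfl hby)
    · refine SimpleGraph.boxProd_adj.mpr (Or.inr
        ⟨SimpleGraph.boxProd_adj.mpr (Or.inl ⟨?_, rfl⟩), rfl⟩)
      refine hamE_adj.mpr ⟨i₀, fun hcon => hi₀ ?_, fun i hi => ?_⟩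
      · show a i₀ - Fsum f y i₀ = c1 i₀
        linear_combination hcon
      · have h' := hoffi₀ i hi
        have h'' : a i - Fsum f y i = c1 i := h'
        linear_combination h''
    · rintro p ⟨⟨x, c', c'', hc', hc'', rfl⟩, hcov⟩
      rcases classify x c' c'' hc' hc'' hcov with ⟨hx, h', h''⟩ | ⟨hx, h', -, h''⟩ |
        ⟨-, -, -, hne⟩ | ⟨-, -, -, hne, -⟩
      · exact absurd (hc1u α ⟨h' ▸ hc', Or.inl rfl⟩).symm h1
      · subst hx; subst h'; subst h''
        exact Prod.ext rfl (Prod.ext rfl hby.symm)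
      · exact absurd h2 hne
      · exact absurd h2 hne
  · -- case 4 : both differ ; move in big block
    have hadj1 : (HamE k).Adj α c1 := by
      rcases hc1cov with h | h
      · exact absurd h.symm h1
      · exact h
    have hadj2 : (HamE r).Adj β c2 := by
      rcases hc2cov with h | h
      · exact absurd h.symm h2
      · exact h
    obtain ⟨i₀, hi₀, hoffi₀⟩ := hamE_adj.mp hadj1
    obtain ⟨j₀, hj₀, hoffj₀⟩ := hamE_adj.mp hadj2
    have ha5 : f i₀ j₀ (y (i₀, j₀)) + (α i₀ - c1 i₀) ≠ f i₀ j₀ (y (i₀, j₀)) := by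
      intro hcon
      exact (sub_ne_zero.mpr hi₀) (by linear_combination hcon)
    have hb5 : g i₀ j₀ (y (i₀, j₀)) + (β j₀ - c2 j₀) ≠ g i₀ j₀ (y (i₀, j₀)) := by
      intro hcon
      exact (sub_ne_zero.mpr hj₀) (by linear_combination hcon)
    obtain ⟨x₀, ⟨h3, hfx₀, hgx₀⟩, hx₀u⟩ := factB (hfg i₀ j₀) ha5 hb5
    set xw : Fin k × Fin r → Fin 3 → E2 := Function.update y (i₀, j₀) x₀ with hxw
    have hxwoff : ∀ m', m' ≠ (i₀, j₀) → xw m' = y m' :=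
      fun m' hm' => Function.update_of_ne hm' x₀ y
    have hxwat : xw (i₀, j₀) = x₀ := Function.update_self (i₀, j₀) x₀ y
    have hAw : a = fun i => Fsum f xw i + c1 i := by
      funext i
      by_cases hi : i = i₀
      · subst hi
        rw [Fsum_at f hxwoff, hxwat, hfx₀]
        have h' := hαd i
        linear_combination -h'
      · rw [Fsum_off f hxwoff hi]
        have h' := hoffi₀ i hi
        have h'' : a i - Fsum f y i = c1 i := h'
        linear_combination h''
    have hBw : b = fun j => Gsum g xw j + c2 j := by
      funext j
      by_cases hj : j = j₀
      · subst hj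
        rw [Gsum_at g hxwoff, hxwat, hgx₀]
        have h' := hβd j
        linear_combination -h'
      · rw [Gsum_off g hxwoff hj]
        have h' := hoffj₀ j hj
        have h'' : b j - Gsum g y j = c2 j := h'
        linear_combination h''
    refine ⟨(xw, fun i => Fsum f xw i + c1 i, fun j => Gsum g xw j + c2 j),
      ⟨⟨xw, c1, c2, hc1C, hc2C, rfl⟩, Or.inr ?_⟩, ?_⟩
    · refine SimpleGraph.boxProd_adj.mpr (Or.inl ⟨?_, ?_⟩)
      · exact ⟨(i₀, j₀), by show Ham3.Adj (y (i₀, j₀)) (xw (i₀, j₀)); rw [hxwat]; exact h3, fun m' hm' => (hxwoff m' hm').symm⟩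
      · exact Prod.ext hAw hBw
    · rintro p ⟨⟨x, c', c'', hc', hc'', rfl⟩, hcov⟩
      rcases classify x c' c'' hc' hc'' hcov with ⟨-, h', -⟩ | ⟨-, -, -, h''⟩ |
        ⟨-, h', -, -⟩ | ⟨hcc1, -, hcc2, -, mi, mj, hoffm, h3m, hv1, hv2⟩
      · exact absurd (hc1u α ⟨h' ▸ hc', Or.inl rfl⟩).symm h1
      · exact absurd (hc2u β ⟨h'' ▸ hc'', Or.inl rfl⟩).symm h2
      · exact absurd (hc1u α ⟨h' ▸ hc', Or.inl rfl⟩).symm h1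
      · have hfa := factA (hfg mi mj) h3m
        have hmi : mi = i₀ := by
          by_contra hnemi
          have h0 := hoffi₀ mi hnemi
          apply hfa.1
          have h00 : f mi mj (y (mi, mj)) - f mi mj (x (mi, mj)) = 0 := by
            linear_combination -hv1 - h0
          linear_combination -h00
        have hmj : mj = j₀ := by
          by_contra hnemj
          have h0 := hoffj₀ mj hnemj
          apply hfa.2
          have h00 : g mi mj (y (mi, mj)) - g mi mj (x (mi, mj)) = 0 := by
            linear_combination -hv2 - h0
          linear_combination -h00
        subst hmi; subst hmj
        have hf' : f mi mj (x (mi, mj)) = f mi mj (y (mi, mj)) + (α mi - c1 mi) := by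
          linear_combination hv1
        have hg' : g mi mj (x (mi, mj)) = g mi mj (y (mi, mj)) + (β mj - c2 mj) := by
          linear_combination hv2
        have hxm : x (mi, mj) = x₀ := hx₀u _ ⟨h3m, hf', hg'⟩
        have hxeq : x = xw := by
          funext m'
          by_cases hm' : m' = (mi, mj)
          · subst hm'
            rw [hxm, hxwat]
          · rw [hoffm m' hm', ← hxwoff m' hm']
        subst hcc1; subst hcc2; subst hxeq
        rfl
end

section
/- For every bijection φ : ZMod 4 → E2, the set {(ωx + y, φ(z), φ(x+y+z), φ(x+2y+3z)) : x, y, z ∈ ZMod 4} ⊆ E4 × E2 × E2 × E2 is a 1-perfect code in the Doob graph D(1,3) on vertex set E4 × E2^3. -/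
open SimpleGraph Polynomial

/-- The Doob graph `D(1,3)` on the vertex set `E4 × E2 × E2 × E2`: the box
product of one copy of the Shrikhande graph and three copies of `K₄`. -/
def Doob13 : SimpleGraph (E4 × E2 × E2 × E2) :=
  ShE □ ((⊤ : SimpleGraph E2) □ ((⊤ : SimpleGraph E2) □ (⊤ : SimpleGraph E2)))


/-! ### Auxiliary material -/


noncomputable def T (a b : ZMod 4) : E4 :=
  ω4 * algebraMap (ZMod 4) E4 a + algebraMap (ZMod 4) E4 b

lemma qmonic : (X ^ 2 + X + 1 : (ZMod 4)[X]).Monic := by monicity!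

lemma qnatdeg : (X ^ 2 + X + 1 : (ZMod 4)[X]).natDegree = 2 := by compute_degree!

lemma qdeg : (X ^ 2 + X + 1 : (ZMod 4)[X]).degree = 2 := by compute_degree!

lemma T_eq_mk (a b : ZMod 4) : T a b = AdjoinRoot.mk _ (C a * X + C b) := by
  simp only [map_add, map_mul, AdjoinRoot.mk_C, AdjoinRoot.mk_X, T, ω4,
    AdjoinRoot.algebraMap_eq]
  ring

lemma T_zero_iff (a b : ZMod 4) : T a b = 0 ↔ a = 0 ∧ b = 0 := by
  constructor
  · intro h
    rw [T_eq_mk, AdjoinRoot.mk_eq_zero] at h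
    have h0 : C a * X + C b = 0 := by
      by_contra hne
      exact qmonic.not_dvd_of_degree_lt hne
        (lt_of_le_of_lt degree_linear_le (by rw [qdeg]; norm_num)) h
    constructor
    · have := congrArg (fun p => Polynomial.coeff p 1) h0
      simpa using this
    · have := congrArg (fun p => Polynomial.coeff p 0) h0
      simpa using this
  · rintro ⟨rfl, rfl⟩
    simp [T]

lemma T_surj (e : E4) : ∃ a b : ZMod 4, e = T a b := by
  obtain ⟨p, rfl⟩ := AdjoinRoot.mk_surjective e
  refine ⟨(p %ₘ (X ^ 2 + X + 1)).coeff 1, (p %ₘ (X ^ 2 + X + 1)).coeff 0, ?_⟩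
  have h1 : AdjoinRoot.mk (X ^ 2 + X + 1) p
      = AdjoinRoot.mk (X ^ 2 + X + 1) (p %ₘ (X ^ 2 + X + 1)) := by
    conv_lhs => rw [← modByMonic_add_div p (X ^ 2 + X + 1)]
    rw [map_add, map_mul, AdjoinRoot.mk_self, zero_mul, add_zero]
  rw [h1, T_eq_mk]
  congr 1
  have hne : (X ^ 2 + X + 1 : (ZMod 4)[X]) ≠ 1 := by
    intro h
    have h2 := qnatdeg
    rw [h] at h2
    simp at h2
  have hlt := natDegree_modByMonic_lt p qmonic hne
  rw [qnatdeg] at hlt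
  exact eq_X_add_C_of_natDegree_le_one (by omega)

lemma omega_rel : ω4 ^ 2 + ω4 + 1 = 0 := by
  have h := AdjoinRoot.mk_self (f := (X ^ 2 + X + 1 : (ZMod 4)[X]))
  simpa [ω4, map_add, map_pow, map_one] using h

lemma T_inj_iff (a b a' b' : ZMod 4) : T a b = T a' b' ↔ a = a' ∧ b = b' := by
  rw [← sub_eq_zero]
  have h : T a b - T a' b' = T (a - a') (b - b') := by
    simp only [T, map_sub]; ring
  rw [h, T_zero_iff, sub_eq_zero, sub_eq_zero]

def sd (d1 d2 : ZMod 4) : Prop :=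
  (d1 = 0 ∧ d2 = 1) ∨ (d1 = 0 ∧ d2 = 3) ∨ (d1 = 1 ∧ d2 = 0) ∨
  (d1 = 3 ∧ d2 = 0) ∨ (d1 = 1 ∧ d2 = 1) ∨ (d1 = 3 ∧ d2 = 3)

instance (d1 d2 : ZMod 4) : Decidable (sd d1 d2) := by unfold sd; infer_instance

lemma eps_iff (d1 d2 : ZMod 4) : T d1 d2 ∈ epsE4 ↔ sd d1 d2 := by
  have c3 : (algebraMap (ZMod 4) E4) 3 = -1 := by
    have h3 : (3 : ZMod 4) = -1 := by decide
    rw [h3, map_neg, map_one]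
  have h1 : (1 : E4) = T 0 1 := by
    simp only [T, map_zero, map_one, mul_zero, zero_add]
  have hw : ω4 = T 1 0 := by
    simp only [T, map_zero, map_one, mul_one, add_zero]
  have hw2 : ω4 ^ 2 = T 3 3 := by
    simp only [T, c3]; linear_combination omega_rel
  have hn1 : (-1 : E4) = T 0 3 := by
    simp only [T, map_zero, c3, mul_zero, zero_add]
  have hnw : -ω4 = T 3 0 := by
    simp only [T, map_zero, c3, add_zero]; ring
  have hnw2 : -ω4 ^ 2 = T 1 1 := by
    simp only [T, map_one, mul_one]; linear_combination -omega_rel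
  rw [epsE4, Set.mem_insert_iff, Set.mem_insert_iff, Set.mem_insert_iff, Set.mem_insert_iff,
    Set.mem_insert_iff, Set.mem_singleton_iff, hnw2, hw2, hnw, hn1, hw, h1,
    T_inj_iff, T_inj_iff, T_inj_iff, T_inj_iff, T_inj_iff, T_inj_iff, sd]
  tauto

lemma sd_symm_lemma : ∀ d1 d2 : ZMod 4,
    ((¬(d1 = 0 ∧ d2 = 0)) ∧ (sd d1 d2 ∨ sd (-d1) (-d2))) ↔ sd d1 d2 := by decide

lemma adj_iff (a b a' b' : ZMod 4) : ShE.Adj (T a b) (T a' b') ↔ sd (a - a') (b - b') := by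
  have hsub : ∀ x y x' y' : ZMod 4, T x y - T x' y' = T (x - x') (y - y') := by
    intro x y x' y'; simp only [T, map_sub]; ring
  rw [ShE, SimpleGraph.fromRel_adj, hsub, hsub, ne_eq, T_inj_iff, eps_iff, eps_iff,
    ← sub_eq_zero (a := a), ← sub_eq_zero (a := b), ← neg_sub a a', ← neg_sub b b']
  exact sd_symm_lemma _ _

def P (x0 y0 u1 u2 u3 : ZMod 4) (t : ZMod 4 × ZMod 4 × ZMod 4) : Prop :=
  (x0 = t.1 ∧ y0 = t.2.1 ∧ u1 = t.2.2 ∧ u2 = t.1 + t.2.1 + t.2.2 ∧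
      u3 = t.1 + 2 * t.2.1 + 3 * t.2.2)
  ∨ (sd (x0 - t.1) (y0 - t.2.1) ∧ u1 = t.2.2 ∧ u2 = t.1 + t.2.1 + t.2.2 ∧
      u3 = t.1 + 2 * t.2.1 + 3 * t.2.2)
  ∨ (x0 = t.1 ∧ y0 = t.2.1 ∧ ¬(u1 = t.2.2) ∧ u2 = t.1 + t.2.1 + t.2.2 ∧
      u3 = t.1 + 2 * t.2.1 + 3 * t.2.2)
  ∨ (x0 = t.1 ∧ y0 = t.2.1 ∧ u1 = t.2.2 ∧ ¬(u2 = t.1 + t.2.1 + t.2.2) ∧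
      u3 = t.1 + 2 * t.2.1 + 3 * t.2.2)
  ∨ (x0 = t.1 ∧ y0 = t.2.1 ∧ u1 = t.2.2 ∧ u2 = t.1 + t.2.1 + t.2.2 ∧
      ¬(u3 = t.1 + 2 * t.2.1 + 3 * t.2.2))

def Q (d1 d2 d3 d4 d5 : ZMod 4) : Prop :=
  (d1 = 0 ∧ d2 = 0 ∧ d3 = 0 ∧ d4 = 0 ∧ d5 = 0)
  ∨ (sd d1 d2 ∧ d3 = 0 ∧ d4 = 0 ∧ d5 = 0)
  ∨ (d1 = 0 ∧ d2 = 0 ∧ ¬(d3 = 0) ∧ d4 = 0 ∧ d5 = 0)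
  ∨ (d1 = 0 ∧ d2 = 0 ∧ d3 = 0 ∧ ¬(d4 = 0) ∧ d5 = 0)
  ∨ (d1 = 0 ∧ d2 = 0 ∧ d3 = 0 ∧ d4 = 0 ∧ ¬(d5 = 0))

instance (d1 d2 d3 d4 d5 : ZMod 4) : Decidable (Q d1 d2 d3 d4 d5) := by
  unfold Q; infer_instance

lemma P_iff_Q (x0 y0 u1 u2 u3 x y z : ZMod 4) :
    P x0 y0 u1 u2 u3 (x, y, z) ↔
      Q (x0 - x) (y0 - y) (u1 - z) (u2 - (x + y + z)) (u3 - (x + 2 * y + 3 * z)) := by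
  simp only [P, Q, sub_eq_zero]

set_option synthInstance.maxSize 1024 in
set_option synthInstance.maxHeartbeats 1000000 in
set_option maxRecDepth 4000 in
lemma lemA : ∀ s1 s2 : ZMod 4, ∃ d1 d2 d3 d4 d5 : ZMod 4,
    (Q d1 d2 d3 d4 d5 ∧ d4 - d1 - d2 - d3 = s1 ∧ d5 - d1 - 2 * d2 - 3 * d3 = s2) ∧
    ∀ e1 e2 e3 e4 e5 : ZMod 4,
      (Q e1 e2 e3 e4 e5 ∧ e4 - e1 - e2 - e3 = s1 ∧ e5 - e1 - 2 * e2 - 3 * e3 = s2) →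
      e1 = d1 ∧ e2 = d2 ∧ e3 = d3 ∧ e4 = d4 ∧ e5 = d5 := by decide

lemma core (x0 y0 u1 u2 u3 : ZMod 4) :
    ∃ t, P x0 y0 u1 u2 u3 t ∧ ∀ t', P x0 y0 u1 u2 u3 t' → t' = t := by
  obtain ⟨d1, d2, d3, d4, d5, ⟨hQ, hs1, hs2⟩, huniq⟩ :=
    lemA (u2 - x0 - y0 - u1) (u3 - x0 - 2 * y0 - 3 * u1)
  refine ⟨(x0 - d1, y0 - d2, u1 - d3), ?_, ?_⟩
  · rw [P_iff_Q]
    have e1 : x0 - (x0 - d1) = d1 := by ring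
    have e2 : y0 - (y0 - d2) = d2 := by ring
    have e3 : u1 - (u1 - d3) = d3 := by ring
    have e4 : u2 - ((x0 - d1) + (y0 - d2) + (u1 - d3)) = d4 := by linear_combination -hs1
    have e5 : u3 - ((x0 - d1) + 2 * (y0 - d2) + 3 * (u1 - d3)) = d5 := by
      linear_combination -hs2
    rw [e1, e2, e3, e4, e5]
    exact hQ
  · rintro ⟨x', y', z'⟩ hP'
    rw [P_iff_Q] at hP'
    obtain ⟨h1, h2, h3, -, -⟩ := huniq (x0 - x') (y0 - y') (u1 - z') (u2 - (x' + y' + z'))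
      (u3 - (x' + 2 * y' + 3 * z')) ⟨hP', by ring, by ring⟩
    refine Prod.ext ?_ (Prod.ext ?_ ?_) <;> simp only
    · linear_combination -h1
    · linear_combination -h2
    · linear_combination -h3

lemma bridge (φ : ZMod 4 → E2) (hφinj : Function.Injective φ)
    (x0 y0 u1 u2 u3 x y z : ZMod 4) :
    ((T x0 y0, φ u1, φ u2, φ u3) = (T x y, φ z, φ (x + y + z), φ (x + 2 * y + 3 * z)) ∨
      Doob13.Adj (T x0 y0, φ u1, φ u2, φ u3)
        (T x y, φ z, φ (x + y + z), φ (x + 2 * y + 3 * z)))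
    ↔ P x0 y0 u1 u2 u3 (x, y, z) := by
  simp only [Doob13, SimpleGraph.boxProd_adj, top_adj, Prod.mk.injEq, ne_eq, adj_iff,
    T_inj_iff, hφinj.eq_iff, P]
  tauto

theorem perfect_code_D13 (φ : ZMod 4 → E2) (hφ : Function.Bijective φ) :
    IsPerfectCode Doob13
      {p : E4 × E2 × E2 × E2 | ∃ x y z : ZMod 4,
        p = (ω4 * algebraMap (ZMod 4) E4 x + algebraMap (ZMod 4) E4 y,
             φ z, φ (x + y + z), φ (x + 2 * y + 3 * z))} := by
  rintro ⟨a, b1, b2, b3⟩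
  obtain ⟨x0, y0, rfl⟩ := T_surj a
  obtain ⟨u1, rfl⟩ := hφ.2 b1
  obtain ⟨u2, rfl⟩ := hφ.2 b2
  obtain ⟨u3, rfl⟩ := hφ.2 b3
  obtain ⟨⟨x, y, z⟩, hP, huniq⟩ := core x0 y0 u1 u2 u3
  refine ⟨(T x y, φ z, φ (x + y + z), φ (x + 2 * y + 3 * z)),
    ⟨⟨x, y, z, rfl⟩, (bridge φ hφ.1 x0 y0 u1 u2 u3 x y z).mpr hP⟩, ?_⟩
  rintro c ⟨⟨x', y', z', rfl⟩, hnear⟩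
  have hP' := (bridge φ hφ.1 x0 y0 u1 u2 u3 x' y' z').mp hnear
  have ht := huniq (x', y', z') hP'
  rw [Prod.ext_iff, Prod.ext_iff] at ht
  obtain ⟨h1, h2, h3⟩ := ht
  simp only at h1 h2 h3
  subst h1; subst h2; subst h3
  rfl
end
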